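/- The two normal directions are linearly independent on the manifold: if (x1, x2, x3) ∈ M with d > 0, then the triples N1 = X·U_1^0 and N2 = X·U_0^1 are linearly independent in (ℝ³)³; equivalently, the 2×2 Gram matrix S = [[⟨N1,N1⟩, ⟨N1,N2⟩], [⟨N2,N1⟩, ⟨N2,N2⟩]] is positive definite, and in particular its squared Frobenius norm is strictly smaller than the square of its trace. -/

import Mathlib

open RealInnerProductSpace

/-- The triple `X·U_α^β = (η1, η2, η3)` from the paper. -/
noncomputable def XU (x1 x2 x3 : EuclideanSpace ℝ (Fin 3)) (α β : ℝ) :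
    EuclideanSpace ℝ (Fin 3) × EuclideanSpace ℝ (Fin 3) × EuclideanSpace ℝ (Fin 3) :=
  ((α + β) • (x2 - x3),
   (α + β) • x1 - (2 * α) • x2 + (α - β) • x3,
   -((α + β) • x1) + (α - β) • x2 + (2 * β) • x3)

/-- The inner product of two triples of vectors in `ℝ³`. -/
noncomputable def tripleInner
    (ξ η : EuclideanSpace ℝ (Fin 3) × EuclideanSpace ℝ (Fin 3) ×
      EuclideanSpace ℝ (Fin 3)) : ℝ :=
  ⟪ξ.1, η.1⟫ + ⟪ξ.2.1, η.2.1⟫ + ⟪ξ.2.2, η.2.2⟫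

/-- The 2×2 Gram matrix `S` of the two normal directions `N1 = X·U_1^0`, `N2 = X·U_0^1`. -/
noncomputable def gramS (x1 x2 x3 : EuclideanSpace ℝ (Fin 3)) : Matrix (Fin 2) (Fin 2) ℝ :=
  !![tripleInner (XU x1 x2 x3 1 0) (XU x1 x2 x3 1 0),
     tripleInner (XU x1 x2 x3 1 0) (XU x1 x2 x3 0 1);
     tripleInner (XU x1 x2 x3 0 1) (XU x1 x2 x3 1 0),
     tripleInner (XU x1 x2 x3 0 1) (XU x1 x2 x3 0 1)]

private lemma gram_entries (d : ℝ)
    (x1 x2 x3 : EuclideanSpace ℝ (Fin 3))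
    (h1 : ⟪x1 - x2, x2 - x3⟫ = -d ^ 2 / 2)
    (h2 : ⟪x1 - x3, x2 - x3⟫ = d ^ 2 / 2) :
    tripleInner (XU x1 x2 x3 1 0) (XU x1 x2 x3 1 0)
      = 2 * ⟪x1 - x2, x1 - x2⟫ + 3 * d ^ 2 ∧
    tripleInner (XU x1 x2 x3 1 0) (XU x1 x2 x3 0 1)
      = 2 * ⟪x1 - x2, x1 - x2⟫ - d ^ 2 ∧
    tripleInner (XU x1 x2 x3 0 1) (XU x1 x2 x3 1 0)
      = 2 * ⟪x1 - x2, x1 - x2⟫ - d ^ 2 ∧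
    tripleInner (XU x1 x2 x3 0 1) (XU x1 x2 x3 0 1)
      = 2 * ⟪x1 - x2, x1 - x2⟫ + 3 * d ^ 2 := by
  simp only [tripleInner, XU, inner_sub_left, inner_sub_right, inner_add_left, inner_add_right,
    inner_smul_left, inner_smul_right, inner_neg_left, inner_neg_right, conj_trivial] at *
  rw [real_inner_comm x2 x1, real_inner_comm x3 x1, real_inner_comm x3 x2] at *
  refine ⟨by linarith, by linarith, by linarith, by linarith⟩

/-- The two normal directions are linearly independent on the manifold:
if `(x1, x2, x3) ∈ M` with `d > 0`, then `N1 = X·U_1^0` and `N2 = X·U_0^1` are linearly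
independent in `(ℝ³)³`; equivalently, the 2×2 Gram matrix `S` is positive definite, and
in particular its squared Frobenius norm is strictly smaller than the square of its
trace. -/
theorem normals_linearly_independent (d : ℝ) (hd : 0 < d)
    (x1 x2 x3 : EuclideanSpace ℝ (Fin 3))
    (h1 : ⟪x1 - x2, x2 - x3⟫ = -d ^ 2 / 2)
    (h2 : ⟪x1 - x3, x2 - x3⟫ = d ^ 2 / 2) :
    LinearIndependent ℝ ![XU x1 x2 x3 1 0, XU x1 x2 x3 0 1] ∧
    (gramS x1 x2 x3).PosDef ∧
    (gramS x1 x2 x3 0 0) ^ 2 + (gramS x1 x2 x3 0 1) ^ 2 +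
      (gramS x1 x2 x3 1 0) ^ 2 + (gramS x1 x2 x3 1 1) ^ 2 <
      (gramS x1 x2 x3 0 0 + gramS x1 x2 x3 1 1) ^ 2 := by
  obtain ⟨e00, e01, e10, e11⟩ := gram_entries d x1 x2 x3 h1 h2
  set q : ℝ := ⟪x1 - x2, x1 - x2⟫ with hq_def
  have hq : 0 ≤ q := real_inner_self_nonneg
  have hd2 : 0 < d ^ 2 := by positivity
  have hG : gramS x1 x2 x3 =
      !![2 * q + 3 * d ^ 2, 2 * q - d ^ 2; 2 * q - d ^ 2, 2 * q + 3 * d ^ 2] := by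
    ext i j
    fin_cases i <;> fin_cases j <;> simp [gramS, e00, e01, e10, e11]
  refine ⟨?_, ⟨?_, ?_⟩, ?_⟩
  · rw [LinearIndependent.pair_iff]
    intro s t hst
    have hst1 := congrArg Prod.fst hst
    have hst2 := congrArg (fun p => Prod.fst (Prod.snd p)) hst
    simp only [XU, Prod.fst_add, Prod.smul_fst, Prod.snd_add, Prod.smul_snd, Prod.fst_zero,
      Prod.snd_zero] at hst1 hst2
    have g1 := congrArg (fun v => ⟪v, x2 - x3⟫) hst1
    have g2 := congrArg (fun v => ⟪v, x2 - x3⟫) hst2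
    simp only [inner_add_left, inner_smul_left, inner_sub_left, inner_sub_right, inner_add_right,
      inner_neg_left, conj_trivial, inner_zero_left] at g1 g2
    simp only [inner_sub_left, inner_sub_right] at h1 h2
    simp only [real_inner_comm x3 x2] at g1 g2 h1 h2
    have hs4 : s * d ^ 2 * 4 = 0 := by
      linear_combination g1 - 2 * g2 + (5 * s + t) * h1 - (3 * s - t) * h2
    have hs : s = 0 := by
      have h := mul_eq_zero.mp (show s * (d ^ 2 * 4) = 0 by linarith)
      rcases h with h | h
      · exact h
      · exact absurd h (by positivity)
    have ht4 : t * d ^ 2 * 4 = 0 := by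
      linear_combination 4 * g1 + (4 * s + 4 * t) * h1 - (4 * s + 4 * t) * h2 - hs4
    have ht : t = 0 := by
      have h := mul_eq_zero.mp (show t * (d ^ 2 * 4) = 0 by linarith)
      rcases h with h | h
      · exact h
      · exact absurd h (by positivity)
    exact ⟨hs, ht⟩
  · -- IsHermitian
    rw [hG, Matrix.IsHermitian]
    ext i j
    fin_cases i <;> fin_cases j <;> simp [Matrix.conjTranspose_apply]
  · intro x hx
    have hx' : x 0 ≠ 0 ∨ x 1 ≠ 0 := by
      by_contra h
      push_neg at h
      apply hx
      ext i
      fin_cases i <;> simp [h.1, h.2]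
    have hxx : 0 < x 0 ^ 2 + x 1 ^ 2 := by
      rcases hx' with h | h <;> positivity
    have expand : (x.sum fun i xi => x.sum fun j xj => star xi * gramS x1 x2 x3 i j * xj) =
        (2 * q + 3 * d ^ 2) * (x 0 ^ 2 + x 1 ^ 2) + 2 * (2 * q - d ^ 2) * (x 0 * x 1) := by
      rw [hG]
      simp [Finsupp.sum_fintype, Fin.sum_univ_two]
      ring
    rw [expand]
    nlinarith [sq_nonneg (x 0 + x 1), sq_nonneg (x 0 - x 1), mul_pos hd2 hxx,
      mul_nonneg hq (sq_nonneg (x 0 + x 1))]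
  · rw [hG]
    simp only [Matrix.cons_val', Matrix.cons_val_zero, Matrix.cons_val_one, Matrix.head_cons,
      Matrix.empty_val', Matrix.cons_val_fin_one, Matrix.head_fin_const, Matrix.of_apply]
    nlinarith [mul_nonneg hq hd2.le]
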